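/- arXiv:1012.0170 — 3 statements merged into one kernel-verified Lean document; each statement's English description precedes it below -/
import Mathlib

section
/- Let c : ℕ → ℂ and let w ∈ ℂ satisfy |w| > 1 and limsup_{k→∞} |c_k|^{1/k} > 1/|w|. Then the sequence of terms k ↦ c_k · T_k(Zh(w)) does not tend to 0 as k → ∞; in particular the series Σ_{k=0}^∞ c_k · T_k(Zh(w)) is not summable. -/
open Filter

/-- The Joukowski map `Zh w = (w + w⁻¹) / 2`. -/
noncomputable def Zh (w : ℂ) : ℂ := (w + w⁻¹) / 2

lemma T_eval_Zh (w : ℂ) (hw : w ≠ 0) :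
    ∀ n : ℕ, (Polynomial.Chebyshev.T ℂ n).eval (Zh w) = (w ^ n + w⁻¹ ^ n) / 2 := by
  have key : ∀ n : ℕ, (Polynomial.Chebyshev.T ℂ n).eval (Zh w) = (w ^ n + w⁻¹ ^ n) / 2 ∧
      (Polynomial.Chebyshev.T ℂ (n + 1)).eval (Zh w) = (w ^ (n + 1) + w⁻¹ ^ (n + 1)) / 2 := by
    intro n
    induction n with
    | zero =>
      constructor
      · norm_num [Polynomial.Chebyshev.T_zero]
      · simp [Polynomial.Chebyshev.T_one, Zh]
    | succ n ih =>
      refine ⟨ih.2, ?_⟩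
      have hcast : ((n + 1 : ℕ) : ℤ) + 1 = (n : ℤ) + 2 := by push_cast; ring
      rw [hcast, Polynomial.Chebyshev.T_add_two]
      simp only [Polynomial.eval_sub, Polynomial.eval_mul, Polynomial.eval_ofNat,
        Polynomial.eval_X, ih.1, ih.2]
      rw [Zh]
      linear_combination ((w ^ n + w⁻¹ ^ n) / 2) * mul_inv_cancel₀ hw
  exact fun n => (key n).1

/-- If `|w| > 1` and `limsup |c_k|^(1/k) > 1/|w|`, then the terms `c_k · T_k(Zh w)` do not
tend to `0`; in particular the Chebyshev series diverges at `Zh w`. -/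
theorem chebyshev_series_diverges_outside (c : ℕ → ℂ) (w : ℂ) (hw : 1 < ‖w‖)
    (hc : 1 / ‖w‖ <
      Filter.limsup (fun k : ℕ => (‖c k‖) ^ ((1 : ℝ) / k)) atTop) :
    ¬ Tendsto (fun k : ℕ => c k * (Polynomial.Chebyshev.T ℂ k).eval (Zh w)) atTop (nhds 0) ∧
    ¬ Summable (fun k : ℕ => c k * (Polynomial.Chebyshev.T ℂ k).eval (Zh w)) := by
  set a := ‖w‖ with ha
  have ha0 : (0 : ℝ) < a := lt_trans one_pos hw
  have hw0 : w ≠ 0 := norm_pos_iff.mp ha0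
  have h1a : 1 / a < 1 := by
    rw [div_lt_one ha0]; exact hw
  obtain ⟨t, ht1, ht2⟩ := exists_between (lt_min hc (by linarith : (1:ℝ)/a < 1))
  have ht0 : 0 < t := lt_trans (by positivity) ht1
  have htlim : t < Filter.limsup (fun k : ℕ => (‖c k‖) ^ ((1 : ℝ) / k)) atTop :=
    lt_of_lt_of_le ht2 (min_le_left _ _)
  have ht1' : t < 1 := lt_of_lt_of_le ht2 (min_le_right _ _)
  have hta : 1 < t * a := by
    rw [div_lt_iff₀ ha0] at ht1
    linarith
  have hcobdd : Filter.IsCoboundedUnder (· ≤ ·) atTop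
      (fun k : ℕ => (‖c k‖) ^ ((1 : ℝ) / k)) :=
    isCoboundedUnder_le_of_le atTop (x := 0) (fun k => Real.rpow_nonneg (norm_nonneg _) _)
  have hfreq : ∃ᶠ k in atTop, t < (‖c k‖) ^ ((1 : ℝ) / k) :=
    frequently_lt_of_lt_limsup hcobdd htlim
  set δ : ℝ := (t * a - 1) / 2 with hδ
  have hδ0 : 0 < δ := by rw [hδ]; linarith
  -- key lower bound
  have hlow : ∀ k : ℕ, 1 ≤ k → t < (‖c k‖) ^ ((1 : ℝ) / k) →
      δ ≤ ‖c k * (Polynomial.Chebyshev.T ℂ k).eval (Zh w)‖ := by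
    intro k hk1 hk
    have hk0 : (k : ℝ) ≠ 0 := Nat.cast_ne_zero.mpr (by omega)
    have hck : t ^ k ≤ ‖c k‖ := by
      have h1 : t ^ k ≤ ((‖c k‖) ^ ((1 : ℝ) / k)) ^ k :=
        pow_le_pow_left₀ ht0.le hk.le k
      calc t ^ k ≤ ((‖c k‖) ^ ((1 : ℝ) / k)) ^ k := h1
        _ = ‖c k‖ := by
          rw [← Real.rpow_natCast ((‖c k‖) ^ ((1 : ℝ) / k)) k,
            ← Real.rpow_mul (norm_nonneg _), one_div,
            inv_mul_cancel₀ hk0, Real.rpow_one]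
    have hT : (a ^ k - a⁻¹ ^ k) / 2 ≤ ‖(Polynomial.Chebyshev.T ℂ k).eval (Zh w)‖ := by
      rw [T_eval_Zh w hw0 k]
      have h2 : ‖w ^ k‖ ≤ ‖w ^ k + w⁻¹ ^ k‖ + ‖w⁻¹ ^ k‖ := by
        calc ‖w ^ k‖ = ‖(w ^ k + w⁻¹ ^ k) + (-(w⁻¹ ^ k))‖ := by
              congr 1; ring
          _ ≤ _ := by simpa using norm_add_le (w ^ k + w⁻¹ ^ k) (-(w⁻¹ ^ k))
      rw [norm_div]
      have e2 : ‖w ^ k‖ = a ^ k := by rw [ha, norm_pow]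
      have e3 : ‖w⁻¹ ^ k‖ = a⁻¹ ^ k := by rw [ha, norm_pow, norm_inv]
      have e4 : ‖(2:ℂ)‖ = 2 := by norm_num
      rw [e4]
      rw [e2, e3] at h2
      linarith
    have habs : ‖c k * (Polynomial.Chebyshev.T ℂ k).eval (Zh w)‖
        = ‖c k‖ * ‖(Polynomial.Chebyshev.T ℂ k).eval (Zh w)‖ :=
      norm_mul _ _
    rw [habs]
    have hTnn : 0 ≤ ‖(Polynomial.Chebyshev.T ℂ k).eval (Zh w)‖ :=
      norm_nonneg _
    have hstep : t ^ k * ((a ^ k - a⁻¹ ^ k) / 2) ≤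
        ‖c k‖ * ‖(Polynomial.Chebyshev.T ℂ k).eval (Zh w)‖ := by
      have hi1 : a⁻¹ ^ k ≤ 1 := pow_le_one₀ (by positivity)
        (by rw [inv_le_one_iff₀]; right; linarith)
      have hi2 : (1:ℝ) ≤ a ^ k := one_le_pow₀ hw.le
      apply mul_le_mul hck hT (by linarith)
      exact norm_nonneg _
    refine le_trans ?_ hstep
    -- t^k (a^k - a⁻¹^k)/2 = ((ta)^k - (t/a)^k)/2 ≥ (ta - 1)/2 = δ
    have e1 : t ^ k * ((a ^ k - a⁻¹ ^ k) / 2) = ((t * a) ^ k - (t * a⁻¹) ^ k) / 2 := by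
      rw [mul_pow, mul_pow]; ring
    rw [e1, hδ]
    have h4 : t * a ≤ (t * a) ^ k := le_self_pow₀ (by linarith) (by omega)
    have h5 : (t * a⁻¹) ^ k ≤ 1 := by
      apply pow_le_one₀ (by positivity)
      have : a⁻¹ ≤ 1 := by
        rw [inv_le_one_iff₀]; right; linarith
      nlinarith
    linarith
  constructor
  · intro h
    have hev : ∀ᶠ k in atTop,
        ‖c k * (Polynomial.Chebyshev.T ℂ k).eval (Zh w)‖ < δ := by
      have := Metric.tendsto_nhds.mp h δ hδ0
      filter_upwards [this] with k hk
      simpa [Complex.dist_eq] using hk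
    have hev1 : ∀ᶠ k in atTop, 1 ≤ k := eventually_ge_atTop 1
    obtain ⟨k, hk, hk1, hkδ⟩ := (hfreq.and_eventually (hev1.and hev)).exists
    exact absurd (hlow k hk1 hk) (not_le.mpr hkδ)
  · intro h
    have := h.tendsto_atTop_zero
    -- reuse the first part
    have hnt : ¬ Tendsto (fun k : ℕ => c k * (Polynomial.Chebyshev.T ℂ k).eval (Zh w))
        atTop (nhds 0) := by
      intro h'
      have hev : ∀ᶠ k in atTop,
          ‖c k * (Polynomial.Chebyshev.T ℂ k).eval (Zh w)‖ < δ := by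
        have := Metric.tendsto_nhds.mp h' δ hδ0
        filter_upwards [this] with k hk
        simpa [Complex.dist_eq] using hk
      have hev1 : ∀ᶠ k in atTop, 1 ≤ k := eventually_ge_atTop 1
      obtain ⟨k, hk, hk1, hkδ⟩ := (hfreq.and_eventually (hev1.and hev)).exists
      exact absurd (hlow k hk1 hk) (not_le.mpr hkδ)
    exact hnt this
end

section
/- Let ρ > 1 and let f : ℂ → ℂ be holomorphic on an open set containing the closed canonical elliptical region Zh '' {w ∈ ℂ : 1 ≤ |w| ≤ ρ}. Then the Chebyshev coefficients of f satisfy limsup_{k→∞} |c_k(f)|^{1/k} ≤ 1/ρ. -/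
open Filter intervalIntegral

/-- The `k`-th Fourier–Chebyshev coefficient of `f` with respect to the Chebyshev weight
`(1 − x²)^(-1/2)` on `[-1, 1]`. -/
noncomputable def chebCoeff (f : ℂ → ℂ) (k : ℕ) : ℂ :=
  if k = 0 then
    (1 / Real.pi : ℂ) * ∫ x in (-1 : ℝ)..1, f x * (((1 - x ^ 2) ^ (-(1 : ℝ) / 2) : ℝ) : ℂ)
  else
    (2 / Real.pi : ℂ) * ∫ x in (-1 : ℝ)..1,
      f x * (Polynomial.Chebyshev.T ℂ k).eval (x : ℂ) * (((1 - x ^ 2) ^ (-(1 : ℝ) / 2) : ℝ) : ℂ)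

section Aux
open MeasureTheory Set

lemma weight_asm : AEStronglyMeasurable (fun x : ℝ => (1 - x ^ 2) ^ (-(1:ℝ)/2))
    (volume.restrict (Set.uIoc (0:ℝ) 1)) := by
  have hS : Set.uIoc (0:ℝ) 1 = Set.Ioc (0:ℝ) 1 := Set.uIoc_of_le (by norm_num)
  have h1 : (volume : Measure ℝ).restrict (Set.Ioc (0:ℝ) 1)
      = volume.restrict (Set.Ioo (0:ℝ) 1) :=
    (Measure.restrict_congr_set Ioo_ae_eq_Ioc).symm
  rw [hS, h1]
  refine ContinuousOn.aestronglyMeasurable ?_ measurableSet_Ioo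
  refine ContinuousOn.rpow_const ?_ ?_
  · fun_prop
  · rintro x ⟨hx0, hx1⟩
    left
    have : (0:ℝ) < 1 - x ^ 2 := by nlinarith
    exact ne_of_gt this

lemma weight_integrable_right :
    IntervalIntegrable (fun x : ℝ => (1 - x ^ 2) ^ (-(1:ℝ)/2)) volume 0 1 := by
  have h0 : IntervalIntegrable (fun x : ℝ => x ^ (-(1:ℝ)/2)) volume 1 0 :=
    (intervalIntegral.intervalIntegrable_rpow' (by norm_num)).symm
  have h1 : IntervalIntegrable (fun x : ℝ => (1 - x) ^ (-(1:ℝ)/2)) volume 0 1 := by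
    simpa using h0.comp_sub_left 1
  refine h1.mono_fun weight_asm ?_
  filter_upwards [MeasureTheory.ae_restrict_mem measurableSet_uIoc] with x hx
  rw [Set.uIoc_of_le (by norm_num : (0:ℝ) ≤ 1)] at hx
  obtain ⟨hx0, hx1⟩ := hx
  have h2 : (0:ℝ) ≤ 1 - x := by linarith
  have h4 : (0:ℝ) ≤ 1 - x ^ 2 := by nlinarith
  simp only [Real.norm_eq_abs, abs_of_nonneg (Real.rpow_nonneg h4 _),
    abs_of_nonneg (Real.rpow_nonneg h2 _)]
  rcases lt_or_eq_of_le hx1 with h | h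
  · have h5 : (0:ℝ) < 1 - x := by linarith
    have h3 : 1 - x ≤ 1 - x ^ 2 := by nlinarith
    exact Real.rpow_le_rpow_of_nonpos h5 h3 (by norm_num)
  · subst h; norm_num

lemma weight_integrable :
    IntervalIntegrable (fun x : ℝ => (1 - x ^ 2) ^ (-(1:ℝ)/2)) volume (-1) 1 := by
  have hl : IntervalIntegrable (fun x : ℝ => (1 - x ^ 2) ^ (-(1:ℝ)/2)) volume (-1) 0 := by
    have := ((IntervalIntegrable.iff_comp_neg (by simp)).mp weight_integrable_right.symm)
    simpa using this
  exact hl.trans weight_integrable_right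

lemma g_integrable (G : ℝ → ℂ) (hG : ContinuousOn G (Icc (-1:ℝ) 1)) :
    IntervalIntegrable (fun x => G x * (((1 - x ^ 2) ^ (-(1:ℝ)/2) : ℝ) : ℂ)) volume (-1) 1 := by
  have hw : IntervalIntegrable (fun x : ℝ => (((1 - x ^ 2) ^ (-(1:ℝ)/2) : ℝ) : ℂ)) volume (-1) 1 := by
    have hwi := weight_integrable
    rw [intervalIntegrable_iff] at hwi ⊢
    exact hwi.ofReal
  exact hw.continuousOn_mul (by simpa [Set.uIcc_of_le (by norm_num : (-1:ℝ) ≤ 1)] using hG)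

lemma cov (G : ℝ → ℂ) (hG : ContinuousOn G (Icc (-1:ℝ) 1)) :
    ∫ x in (-1:ℝ)..1, G x * (((1 - x ^ 2) ^ (-(1:ℝ)/2) : ℝ) : ℂ)
      = ∫ θ in (0:ℝ)..Real.pi, G (Real.cos θ) := by
  set g : ℝ → ℂ := fun x => G x * (((1 - x ^ 2) ^ (-(1:ℝ)/2) : ℝ) : ℂ) with hg_def
  have hgi : IntervalIntegrable g volume (-1) 1 := g_integrable G hG
  set K : ℝ → ℂ := fun θ => G (Real.cos θ) with hK_def
  have hKc : ContinuousOn K (Set.univ : Set ℝ) := by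
    refine hG.comp Real.continuous_cos.continuousOn ?_
    intro x _; exact ⟨Real.neg_one_le_cos x, Real.cos_le_one x⟩
  have hKi : ∀ a b : ℝ, IntervalIntegrable K volume a b := fun a b =>
    (hKc.mono (Set.subset_univ _)).intervalIntegrable
  set A : ℝ → ℂ := fun t => ∫ x in (-1:ℝ)..t, g x with hA_def
  have hA : ContinuousOn A (Set.uIcc (-1:ℝ) 1) :=
    intervalIntegral.continuousOn_primitive_interval' hgi Set.left_mem_uIcc
  set B : ℝ → ℂ := fun t => ∫ θ in (0:ℝ)..t, K θ with hB_def
  have hB : ContinuousOn B (Set.uIcc (0:ℝ) Real.pi) :=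
    intervalIntegral.continuousOn_primitive_interval' (hKi 0 Real.pi) Set.left_mem_uIcc
  -- key identity for ε ∈ Ioo 0 (π/2)
  have key : ∀ ε ∈ Set.Ioo (0:ℝ) (Real.pi/2),
      A (Real.cos ε) - A (Real.cos (Real.pi - ε)) = B (Real.pi - ε) - B ε := by
    intro ε ⟨hε0, hε2⟩
    have hπ : (0:ℝ) < Real.pi := Real.pi_pos
    have hεπ : ε ≤ Real.pi - ε := by linarith
    have huIcc : Set.uIcc ε (Real.pi - ε) = Set.Icc ε (Real.pi - ε) := Set.uIcc_of_le hεπ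
    have himg : Real.cos '' Set.uIcc ε (Real.pi - ε) ⊆ Set.Icc (Real.cos (Real.pi - ε)) (Real.cos ε) := by
      rw [huIcc]
      rintro x ⟨θ, ⟨h1, h2⟩, rfl⟩
      constructor
      · exact Real.cos_le_cos_of_nonneg_of_le_pi (by linarith) (by linarith) h2
      · exact Real.cos_le_cos_of_nonneg_of_le_pi (by linarith) (by linarith) h1
    have hIccsub : Set.Icc (Real.cos (Real.pi - ε)) (Real.cos ε) ⊆ Set.Ioo (-1:ℝ) 1 := by
      intro x ⟨h1, h2⟩
      constructor
      · have h3 : Real.cos Real.pi < Real.cos (Real.pi - ε) :=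
          Real.cos_lt_cos_of_nonneg_of_le_pi (by linarith) le_rfl (by linarith)
        rw [Real.cos_pi] at h3
        linarith
      · have h3 : Real.cos ε < Real.cos 0 :=
          Real.cos_lt_cos_of_nonneg_of_le_pi le_rfl (by linarith) hε0
        rw [Real.cos_zero] at h3
        linarith
    have hgc : ContinuousOn g (Real.cos '' Set.uIcc ε (Real.pi - ε)) := by
      refine ContinuousOn.mono ?_ himg
      refine ContinuousOn.mul (hG.mono ?_) ?_
      · exact fun x hx => ⟨(hIccsub hx).1.le, (hIccsub hx).2.le⟩
      · refine Complex.continuous_ofReal.comp_continuousOn ?_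
        refine ContinuousOn.rpow_const (by fun_prop) ?_
        intro x hx
        left
        have h1 := (hIccsub hx).1; have h2 := (hIccsub hx).2
        nlinarith [(hIccsub hx).1, (hIccsub hx).2]
    have hcov := intervalIntegral.integral_comp_smul_deriv'
      (f := Real.cos) (f' := fun θ => -Real.sin θ) (g := g) (a := ε) (b := Real.pi - ε)
      (fun x _ => Real.hasDerivAt_cos x) (Real.continuous_sin.neg.continuousOn) hgc
    have hL : (∫ x in ε..(Real.pi - ε), (fun θ => -Real.sin θ) x • (g ∘ Real.cos) x)
        = -∫ θ in ε..(Real.pi - ε), K θ := by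
      rw [← intervalIntegral.integral_neg]
      apply intervalIntegral.integral_congr
      intro θ hθ
      rw [huIcc] at hθ
      obtain ⟨h1, h2⟩ := hθ
      have hsin : 0 < Real.sin θ := Real.sin_pos_of_pos_of_lt_pi (by linarith) (by linarith)
      have hw : ((1 - Real.cos θ ^ 2) ^ (-(1:ℝ)/2) : ℝ) = (Real.sin θ)⁻¹ := by
        have h1 : (1 : ℝ) - Real.cos θ ^ 2 = Real.sin θ ^ 2 := by
          rw [Real.sin_sq]
        rw [h1, ← Real.rpow_natCast (Real.sin θ) 2, ← Real.rpow_mul hsin.le]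
        norm_num
        exact Real.rpow_neg_one _
      have hne : ((Real.sin θ : ℂ)) ≠ 0 := by exact_mod_cast hsin.ne'
      show (-Real.sin θ : ℝ) • ((g ∘ Real.cos) θ) = -K θ
      simp only [Function.comp, hg_def, hK_def]
      have hne' : Complex.sin ↑θ ≠ 0 := by rw [← Complex.ofReal_sin]; exact hne
      rw [hw, Complex.real_smul, Complex.ofReal_neg, Complex.ofReal_inv, Complex.ofReal_sin]
      rw [neg_mul, mul_comm (G (Real.cos θ)), ← mul_assoc, mul_inv_cancel₀ hne', one_mul]
    rw [hL] at hcov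
    -- hcov : -∫ θ in ε..π-ε, K = ∫ u in cos ε..cos (π-ε), g
    have hAB : ∫ u in Real.cos (Real.pi - ε)..Real.cos ε, g u
        = A (Real.cos ε) - A (Real.cos (Real.pi - ε)) := by
      rw [hA_def]
      have h1 : IntervalIntegrable g volume (-1) (Real.cos ε) :=
        hgi.mono_set (by
          rw [Set.uIcc_of_le (by norm_num : (-1:ℝ) ≤ 1), Set.uIcc_of_le (Real.neg_one_le_cos ε)]
          exact Set.Icc_subset_Icc le_rfl (Real.cos_le_one _))
      have h2 : IntervalIntegrable g volume (-1) (Real.cos (Real.pi - ε)) :=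
        hgi.mono_set (by
          rw [Set.uIcc_of_le (by norm_num : (-1:ℝ) ≤ 1), Set.uIcc_of_le (Real.neg_one_le_cos _)]
          exact Set.Icc_subset_Icc le_rfl (Real.cos_le_one _))
      rw [← intervalIntegral.integral_interval_sub_left h1 h2]
    have hBB : ∫ θ in ε..Real.pi - ε, K θ = B (Real.pi - ε) - B ε := by
      rw [hB_def]
      rw [← intervalIntegral.integral_interval_sub_left (hKi 0 _) (hKi 0 _)]
    rw [← hAB, ← hBB]
    have h5 : (∫ x in Real.cos ε..Real.cos (Real.pi - ε), g x)
        = -∫ u in Real.cos (Real.pi - ε)..Real.cos ε, g u :=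
      intervalIntegral.integral_symm _ _
    rw [h5] at hcov
    linear_combination hcov
  -- limits as ε → 0⁺
  have hπ : (0:ℝ) < Real.pi := Real.pi_pos
  have hmem : Set.Ioo (0:ℝ) (Real.pi/2) ∈ nhdsWithin (0:ℝ) (Set.Ioi 0) :=
    Ioo_mem_nhdsGT_of_mem ⟨le_rfl, by linarith⟩
  have hcos1 : Tendsto (fun ε : ℝ => Real.cos ε) (nhdsWithin 0 (Set.Ioi 0))
      (nhdsWithin 1 (Set.uIcc (-1:ℝ) 1)) := by
    apply tendsto_nhdsWithin_of_tendsto_nhds_of_eventually_within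
    · have := (Real.continuous_cos.tendsto 0).mono_left (nhdsWithin_le_nhds (s := Set.Ioi (0:ℝ)))
      simpa using this
    · filter_upwards with ε
      rw [Set.uIcc_of_le (by norm_num : (-1:ℝ) ≤ 1)]
      exact ⟨Real.neg_one_le_cos ε, Real.cos_le_one ε⟩
  have hcos2 : Tendsto (fun ε : ℝ => Real.cos (Real.pi - ε)) (nhdsWithin 0 (Set.Ioi 0))
      (nhdsWithin (-1:ℝ) (Set.uIcc (-1:ℝ) 1)) := by
    apply tendsto_nhdsWithin_of_tendsto_nhds_of_eventually_within
    · have hc : Continuous (fun ε : ℝ => Real.cos (Real.pi - ε)) := by fun_prop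
      have := (hc.tendsto 0).mono_left (nhdsWithin_le_nhds (s := Set.Ioi (0:ℝ)))
      simpa using this
    · filter_upwards with ε
      rw [Set.uIcc_of_le (by norm_num : (-1:ℝ) ≤ 1)]
      exact ⟨Real.neg_one_le_cos _, Real.cos_le_one _⟩
  have hπε : Tendsto (fun ε : ℝ => Real.pi - ε) (nhdsWithin 0 (Set.Ioi 0))
      (nhdsWithin Real.pi (Set.uIcc (0:ℝ) Real.pi)) := by
    apply tendsto_nhdsWithin_of_tendsto_nhds_of_eventually_within
    · have hc : Continuous (fun ε : ℝ => Real.pi - ε) := by fun_prop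
      have := (hc.tendsto 0).mono_left (nhdsWithin_le_nhds (s := Set.Ioi (0:ℝ)))
      simpa using this
    · filter_upwards [hmem] with ε hε
      rw [Set.uIcc_of_le hπ.le]
      exact ⟨by linarith [hε.1, hε.2], by linarith [hε.1]⟩
  have hεε : Tendsto (fun ε : ℝ => ε) (nhdsWithin 0 (Set.Ioi 0))
      (nhdsWithin (0:ℝ) (Set.uIcc (0:ℝ) Real.pi)) := by
    apply tendsto_nhdsWithin_of_tendsto_nhds_of_eventually_within
    · exact tendsto_id.mono_left nhdsWithin_le_nhds
    · filter_upwards [hmem] with ε hε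
      rw [Set.uIcc_of_le hπ.le]
      exact ⟨hε.1.le, by linarith [hε.2]⟩
  have t1 : Tendsto (fun ε : ℝ => A (Real.cos ε)) (nhdsWithin 0 (Set.Ioi 0)) (nhds (A 1)) :=
    (hA 1 Set.right_mem_uIcc).tendsto.comp hcos1
  have t2 : Tendsto (fun ε : ℝ => A (Real.cos (Real.pi - ε))) (nhdsWithin 0 (Set.Ioi 0))
      (nhds (A (-1))) := (hA (-1) Set.left_mem_uIcc).tendsto.comp hcos2
  have t3 : Tendsto (fun ε : ℝ => B (Real.pi - ε)) (nhdsWithin 0 (Set.Ioi 0))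
      (nhds (B Real.pi)) := (hB Real.pi Set.right_mem_uIcc).tendsto.comp hπε
  have t4 : Tendsto (fun ε : ℝ => B ε) (nhdsWithin 0 (Set.Ioi 0)) (nhds (B 0)) :=
    (hB 0 Set.left_mem_uIcc).tendsto.comp hεε
  have hEq : (fun ε : ℝ => A (Real.cos ε) - A (Real.cos (Real.pi - ε)))
      =ᶠ[nhdsWithin 0 (Set.Ioi 0)] (fun ε : ℝ => B (Real.pi - ε) - B ε) := by
    filter_upwards [hmem] with ε hε
    exact key ε hε
  have huniq : A 1 - A (-1) = B Real.pi - B 0 :=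
    tendsto_nhds_unique_of_eventuallyEq (t1.sub t2) (t3.sub t4) hEq
  have hA0 : A (-1) = 0 := intervalIntegral.integral_same
  have hB0 : B 0 = 0 := intervalIntegral.integral_same
  rw [hA0, hB0, sub_zero, sub_zero] at huniq
  exact huniq

lemma Zh_exp (θ : ℝ) : Zh (Complex.exp (θ * Complex.I)) = Complex.cos θ := by
  rw [Zh, ← Complex.exp_neg]
  rw [Complex.cos]
  ring_nf

lemma circle_to_integral (f : ℂ → ℂ) (k : ℕ) :
    (∮ z in C(0, (1:ℝ)), f (Zh z) * z ^ (-(k:ℤ)-1))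
      = Complex.I * ∫ θ in (0:ℝ)..2*Real.pi,
          f (Complex.cos θ) * Complex.exp (-(k:ℂ) * θ * Complex.I) := by
  rw [circleIntegral, ← intervalIntegral.integral_const_mul]
  apply intervalIntegral.integral_congr
  intro θ _
  simp only [deriv_circleMap, circleMap_zero, Complex.ofReal_one, one_mul]
  rw [Zh_exp]
  have hz : Complex.exp (θ * Complex.I) ^ (-(k:ℤ)-1)
      = Complex.exp (((-(k:ℤ)-1 : ℤ) : ℂ) * (θ * Complex.I)) :=
    (Complex.exp_int_mul _ _).symm
  have hcomb : Complex.exp (θ * Complex.I) * Complex.exp (((-(k:ℤ)-1 : ℤ) : ℂ) * (θ * Complex.I))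
      = Complex.exp (-(k:ℂ) * θ * Complex.I) := by
    rw [← Complex.exp_add]; congr 1; push_cast; ring
  rw [hz, smul_eq_mul]
  calc Complex.exp (θ * Complex.I) * Complex.I *
        (f (Complex.cos θ) * Complex.exp (((-(k:ℤ)-1 : ℤ) : ℂ) * (θ * Complex.I)))
      = Complex.I * (f (Complex.cos θ) *
          (Complex.exp (θ * Complex.I) * Complex.exp (((-(k:ℤ)-1 : ℤ) : ℂ) * (θ * Complex.I)))) := by
        ring
    _ = _ := by rw [hcomb]

lemma sym_reduce (F : ℝ → ℂ) (hF : Continuous F)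
    (hsymm : ∀ θ : ℝ, F (2 * Real.pi - θ) = F θ) (k : ℕ) :
    ∫ θ in (0:ℝ)..2*Real.pi, F θ * Complex.exp (-(k:ℂ) * θ * Complex.I)
      = 2 * ∫ θ in (0:ℝ)..Real.pi, F θ * Complex.cos ((k:ℂ) * θ) := by
  have hc1 : Continuous fun θ : ℝ => F θ * Complex.exp (-(k:ℂ) * θ * Complex.I) := by
    fun_prop
  have hc2 : Continuous fun θ : ℝ => F θ * Complex.exp ((k:ℂ) * θ * Complex.I) := by
    fun_prop
  have hsplit : ∫ θ in (0:ℝ)..2*Real.pi, F θ * Complex.exp (-(k:ℂ) * θ * Complex.I)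
      = (∫ θ in (0:ℝ)..Real.pi, F θ * Complex.exp (-(k:ℂ) * θ * Complex.I))
        + ∫ θ in Real.pi..2*Real.pi, F θ * Complex.exp (-(k:ℂ) * θ * Complex.I) :=
    (intervalIntegral.integral_add_adjacent_intervals
      (hc1.intervalIntegrable _ _) (hc1.intervalIntegrable _ _)).symm
  have hsub : ∫ θ in Real.pi..2*Real.pi, F θ * Complex.exp (-(k:ℂ) * θ * Complex.I)
      = ∫ θ in (0:ℝ)..Real.pi, F θ * Complex.exp ((k:ℂ) * θ * Complex.I) := by
    have := intervalIntegral.integral_comp_sub_left (a := (0:ℝ)) (b := Real.pi)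
      (fun θ => F θ * Complex.exp (-(k:ℂ) * θ * Complex.I)) (2 * Real.pi)
    rw [sub_zero, show 2*Real.pi - Real.pi = Real.pi by ring] at this
    rw [← this]
    apply intervalIntegral.integral_congr
    intro θ _
    simp only
    rw [hsymm]
    congr 1
    have harg : (-(k:ℂ)) * ((2*Real.pi - θ : ℝ):ℂ) * Complex.I
        = ((-(k:ℤ) : ℤ) : ℂ) * (2*Real.pi*Complex.I) + (k:ℂ)*θ*Complex.I := by
      push_cast; ring
    rw [harg, Complex.exp_add, Complex.exp_int_mul_two_pi_mul_I, one_mul]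
  rw [hsplit, hsub, ← intervalIntegral.integral_add
    (hc1.intervalIntegrable _ _) (hc2.intervalIntegrable _ _),
    ← intervalIntegral.integral_const_mul]
  apply intervalIntegral.integral_congr
  intro θ _
  simp only
  have h2c : 2 * Complex.cos ((k:ℂ) * θ) = Complex.exp ((k:ℂ)*θ*Complex.I)
      + Complex.exp (-((k:ℂ)*θ)*Complex.I) := Complex.two_cos _
  have : Complex.exp (-(k:ℂ)*θ*Complex.I) = Complex.exp (-((k:ℂ)*θ)*Complex.I) := by ring_nf
  rw [this]
  linear_combination -(F θ) * h2c

end Aux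

/-- If `f` is holomorphic on an open set containing the closed canonical elliptical region
`Zh '' {w : 1 ≤ |w| ≤ ρ}`, then its Chebyshev coefficients satisfy
`limsup |c_k(f)|^(1/k) ≤ 1/ρ`. -/
theorem chebCoeff_limsup_le (ρ : ℝ) (hρ : 1 < ρ) (f : ℂ → ℂ)
    (hf : ∃ U : Set ℂ, IsOpen U ∧
      Zh '' {w : ℂ | 1 ≤ ‖w‖ ∧ ‖w‖ ≤ ρ} ⊆ U ∧ DifferentiableOn ℂ f U) :
    Filter.limsup (fun k : ℕ => ‖chebCoeff f k‖ ^ ((1 : ℝ) / k)) atTop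
      ≤ 1 / ρ := by
  obtain ⟨U, hUopen, hUsub, hfd⟩ := hf
  have hρ0 : (0:ℝ) < ρ := by linarith
  have hmemU : ∀ w : ℂ, 1 ≤ ‖w‖ → ‖w‖ ≤ ρ → Zh w ∈ U :=
    fun w h1 h2 => hUsub ⟨w, ⟨h1, h2⟩, rfl⟩
  have hseg : ∀ x : ℝ, -1 ≤ x → x ≤ 1 → (x:ℂ) ∈ U := by
    intro x h1 h2
    have hx : (x:ℂ) = Zh (Complex.exp ((Real.arccos x : ℂ) * Complex.I)) := by
      rw [show ((Real.arccos x : ℂ)) = ((Real.arccos x : ℝ) : ℂ) by norm_num, Zh_exp,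
        ← Complex.ofReal_cos, Real.cos_arccos h1 h2]
    rw [hx]
    apply hmemU <;> rw [show ((Real.arccos x : ℂ)) = ((Real.arccos x : ℝ) : ℂ) by norm_num,
      Complex.norm_exp_ofReal_mul_I] <;> linarith
  -- compactness and sup bound
  set S : Set ℂ := {w : ℂ | 1 ≤ ‖w‖ ∧ ‖w‖ ≤ ρ} with hS_def
  have hSc : IsCompact S := by
    have hSeq : S = Metric.closedBall (0:ℂ) ρ \ Metric.ball (0:ℂ) 1 := by
      ext w
      simp only [hS_def, Set.mem_setOf_eq, Set.mem_diff, Metric.mem_closedBall,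
        Metric.mem_ball, Complex.dist_eq, sub_zero, not_lt]
      tauto
    rw [hSeq]
    exact (isCompact_closedBall _ _).diff Metric.isOpen_ball
  have hZhc : ContinuousOn Zh S := by
    apply ContinuousOn.div_const
    apply ContinuousOn.add continuousOn_id
    apply ContinuousOn.inv₀ continuousOn_id
    intro w hw h
    rw [id_eq] at h
    rw [h] at hw
    simp only [hS_def, Set.mem_setOf_eq, norm_zero] at hw
    linarith [hw.1]
  obtain ⟨M, hM⟩ := (hSc.image_of_continuousOn hZhc).exists_bound_of_continuousOn
    ((hfd.continuousOn).mono hUsub)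
  set C : ℝ := max M 1 with hC_def
  have hC1 : (1:ℝ) ≤ C := le_max_right _ _
  have hC0 : (0:ℝ) < C := by linarith
  have hMC : ∀ z : ℂ, 1 ≤ ‖z‖ → ‖z‖ ≤ ρ → ‖f (Zh z)‖ ≤ C :=
    fun z h1 h2 => le_trans (hM (Zh z) ⟨z, ⟨h1, h2⟩, rfl⟩) (le_max_left _ _)
  -- main bound
  have hbound : ∀ r : ℝ, 1 ≤ r → r ≤ ρ → ∀ k : ℕ, k ≠ 0 →
      ‖chebCoeff f k‖ ≤ 2 * C * r ^ (-(k:ℤ)) := by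
    intro r hr1 hrρ k hk
    have hr0 : (0:ℝ) < r := by linarith
    set g : ℂ → ℂ := fun z => f (Zh z) * z ^ (-(k:ℤ)-1) with hg_def
    have hdiff : ∀ z : ℂ, 1 ≤ ‖z‖ → ‖z‖ ≤ r → DifferentiableAt ℂ g z := by
      intro z h1 h2
      have hz0 : z ≠ 0 := by
        intro h; rw [h] at h1; simp at h1; linarith
      have hZh : DifferentiableAt ℂ Zh z := by
        have : DifferentiableAt ℂ (fun w : ℂ => (w + w⁻¹) / 2) z :=
          (differentiableAt_id.add (differentiableAt_inv hz0)).div_const 2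
        exact this
      have hfz : DifferentiableAt ℂ f (Zh z) :=
        hfd.differentiableAt (hUopen.mem_nhds (hmemU z h1 (h2.trans hrρ)))
      exact (hfz.comp z hZh).mul (differentiableAt_zpow.mpr (Or.inl hz0))
    have hann : (∮ z in C(0, (1:ℝ)), g z) = ∮ z in C(0, r), g z := by
      refine (Complex.circleIntegral_eq_of_differentiable_on_annulus_off_countable
        zero_lt_one hr1 Set.countable_empty ?_ ?_).symm
      · intro z hz
        obtain ⟨hz1, hz2⟩ := hz
        rw [Metric.mem_closedBall, Complex.dist_eq, sub_zero] at hz1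
        rw [Metric.mem_ball, Complex.dist_eq, sub_zero, not_lt] at hz2
        exact (hdiff z hz2
          hz1).continuousAt.continuousWithinAt
      · intro z hz
        obtain ⟨⟨hz1, hz2⟩, -⟩ := hz
        rw [Metric.mem_ball, Complex.dist_eq, sub_zero] at hz1
        rw [Metric.mem_closedBall, Complex.dist_eq, sub_zero, not_le] at hz2
        exact hdiff z hz2.le
          hz1.le
    -- continuity facts
    have hfcont : ContinuousOn f U := hfd.continuousOn
    have hF : Continuous (fun θ : ℝ => f (Complex.cos θ)) := by
      have hmaps : ∀ θ : ℝ, Complex.cos θ ∈ U := by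
        intro θ
        rw [← Complex.ofReal_cos]
        exact hseg _ (Real.neg_one_le_cos θ) (Real.cos_le_one θ)
      exact hfcont.comp_continuous (by fun_prop) hmaps
    have hGcont : ContinuousOn
        (fun x : ℝ => f x * (Polynomial.Chebyshev.T ℂ k).eval (x:ℂ)) (Set.Icc (-1:ℝ) 1) := by
      apply ContinuousOn.mul
      · exact hfcont.comp (Complex.continuous_ofReal.continuousOn)
          (fun x hx => hseg x hx.1 hx.2)
      · fun_prop
    -- the identity chebCoeff = circle integral / (π I)
    have h1 : chebCoeff f k = (2/Real.pi : ℂ)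
        * ∫ θ in (0:ℝ)..Real.pi, f (Complex.cos θ) * Complex.cos ((k:ℂ)*θ) := by
      rw [chebCoeff, if_neg hk]
      congr 1
      rw [cov _ hGcont]
      apply intervalIntegral.integral_congr
      intro θ _
      simp only
      rw [Complex.ofReal_cos, Polynomial.Chebyshev.T_complex_cos]
      norm_num
    have hsymm : ∀ θ : ℝ, (fun θ : ℝ => f (Complex.cos θ)) (2 * Real.pi - θ)
        = (fun θ : ℝ => f (Complex.cos θ)) θ := by
      intro θ
      simp only
      rw [show ((2*Real.pi - θ : ℝ) : ℂ) = 2*(Real.pi:ℂ) - θ by push_cast; ring,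
        Complex.cos_two_pi_sub]
    have h2 := sym_reduce (fun θ : ℝ => f (Complex.cos θ)) hF hsymm k
    have h3 := circle_to_integral f k
    have hcheb : chebCoeff f k = (∮ z in C(0, r), g z) / ((Real.pi : ℂ) * Complex.I) := by
      rw [← hann, hg_def]
      rw [h3, h2, h1]
      have hπ : ((Real.pi : ℂ)) ≠ 0 := Complex.ofReal_ne_zero.mpr Real.pi_ne_zero
      field_simp
    -- norm bound
    have hbnd : ∀ z ∈ Metric.sphere (0:ℂ) r, ‖g z‖ ≤ C * r ^ (-(k:ℤ)-1) := by
      intro z hz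
      rw [Metric.mem_sphere, Complex.dist_eq, sub_zero] at hz
      have hza : ‖z‖ = r := by exact hz
      have hznorm : ‖g z‖ = ‖f (Zh z)‖ * r ^ (-(k:ℤ)-1) := by
        rw [hg_def]
        simp only [norm_mul, norm_zpow, hza]
      rw [hznorm]
      exact mul_le_mul_of_nonneg_right
        (hMC z (by rw [hza]; exact hr1) (by rw [hza]; exact hrρ))
        (zpow_nonneg hr0.le _)
    have hnorm := circleIntegral.norm_integral_le_of_norm_le_const hr0.le hbnd
    have habs : ‖chebCoeff f k‖
        = ‖(∮ z in C(0, r), g z)‖ / Real.pi := by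
      rw [hcheb]
      rw [norm_div, norm_mul, Complex.norm_I, Complex.norm_real, Real.norm_eq_abs,
        abs_of_pos Real.pi_pos, mul_one]
    rw [habs]
    rw [div_le_iff₀ Real.pi_pos]
    calc ‖(∮ z in C(0, r), g z)‖ ≤ 2 * Real.pi * r * (C * r ^ (-(k:ℤ)-1)) := hnorm
      _ = 2 * C * r ^ (-(k:ℤ)) * Real.pi := by
          rw [show (-(k:ℤ)) = 1 + (-(k:ℤ)-1) by ring, zpow_add₀ hr0.ne', zpow_one]
          ring
    -- end hbound
  -- limsup argument
  have hnonneg : ∀ k : ℕ, 0 ≤ ‖chebCoeff f k‖ ^ ((1:ℝ)/k) :=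
    fun k => Real.rpow_nonneg (norm_nonneg _) _
  apply le_of_forall_gt_imp_ge_of_dense
  intro b hb
  have hb0 : 0 < b := lt_trans (by positivity) hb
  have h1b : 1/b < ρ := by
    rw [div_lt_iff₀ hb0]
    rw [div_lt_iff₀ hρ0] at hb
    linarith [mul_comm b ρ]
  set r : ℝ := (max (1/b) 1 + ρ) / 2 with hr_def
  have hr1 : 1 < r := by
    have : max (1/b) 1 ≥ 1 := le_max_right _ _
    rw [hr_def]; rcases max_cases (1/b) 1 with ⟨h, _⟩ | ⟨h, _⟩ <;> rw [h] <;> linarith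
  have hrρ : r ≤ ρ := by
    have : max (1/b) 1 < ρ := max_lt h1b hρ
    rw [hr_def]; linarith
  have hrb : 1/r < b := by
    have h2 : 1/b < r := by
      have : (1/b) ≤ max (1/b) 1 := le_max_left _ _
      have : max (1/b) 1 < r := by
        rw [hr_def]
        have : max (1/b) 1 < ρ := max_lt h1b hρ
        linarith
      linarith
    rw [div_lt_iff₀ (by linarith : (0:ℝ) < r)]
    rw [div_lt_iff₀ hb0] at h2
    linarith [mul_comm r b]
  -- tendsto of the majorant
  have htend : Tendsto (fun k : ℕ => (2*C) ^ ((1:ℝ)/k) / r) atTop (nhds (1/r)) := by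
    have h2C : (0:ℝ) < 2*C := by linarith
    have hlog : Tendsto (fun k : ℕ => Real.log (2*C) * ((1:ℝ)/k)) atTop (nhds 0) := by
      have : Tendsto (fun n : ℕ => 1 / (n : ℝ)) atTop (nhds 0) := tendsto_one_div_atTop_nhds_zero_nat
      simpa using this.const_mul (Real.log (2*C))
    have hexp : Tendsto (fun k : ℕ => Real.exp (Real.log (2*C) * ((1:ℝ)/k))) atTop
        (nhds 1) := by
      have := (Real.continuous_exp.tendsto 0).comp hlog
      simpa [Function.comp_def] using this
    have heq : (fun k : ℕ => (2*C) ^ ((1:ℝ)/k))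
        = fun k : ℕ => Real.exp (Real.log (2*C) * ((1:ℝ)/k)) := by
      funext k
      rw [Real.rpow_def_of_pos h2C]
    have htd := hexp.div_const r
    exact htd.congr (fun k => by rw [← Real.rpow_def_of_pos h2C])
  have hev : ∀ᶠ k : ℕ in atTop, ‖chebCoeff f k‖ ^ ((1:ℝ)/k) ≤ b := by
    have hev1 : ∀ᶠ k : ℕ in atTop, (2*C) ^ ((1:ℝ)/k) / r < b :=
      htend.eventually_lt_const hrb
    filter_upwards [hev1, eventually_ge_atTop 1] with k hk1 hk2
    have hkne : k ≠ 0 := by omega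
    have hkR : ((k:ℝ)) ≠ 0 := Nat.cast_ne_zero.mpr hkne
    have hb1 : ‖chebCoeff f k‖ ≤ 2 * C * r ^ (-(k:ℤ)) :=
      hbound r hr1.le hrρ k hkne
    have hstep : ‖chebCoeff f k‖ ^ ((1:ℝ)/k)
        ≤ (2 * C * r ^ (-(k:ℤ))) ^ ((1:ℝ)/k) :=
      Real.rpow_le_rpow (norm_nonneg _) hb1 (by positivity)
    refine le_trans hstep (le_of_lt (lt_of_le_of_lt ?_ hk1))
    have hr0 : (0:ℝ) < r := by linarith
    have hzpow : (r : ℝ) ^ (-(k:ℤ)) = r ^ ((-(k:ℝ)) : ℝ) := by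
      rw [← Real.rpow_intCast r (-(k:ℤ))]
      norm_num
    rw [hzpow, Real.mul_rpow (by linarith) (Real.rpow_nonneg hr0.le _),
      ← Real.rpow_mul hr0.le]
    rw [show (-(k:ℝ)) * ((1:ℝ)/k) = -1 by field_simp]
    rw [Real.rpow_neg_one]
    exact le_of_eq (div_eq_mul_inv _ _).symm
  have hcob : IsCoboundedUnder (· ≤ ·) atTop
      (fun k : ℕ => ‖chebCoeff f k‖ ^ ((1:ℝ)/k)) :=
    isCoboundedUnder_le_of_le atTop hnonneg
  exact Filter.limsup_le_of_le hcob hev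
end

section
/- Let ρ > 1, let n ≥ 1 be a natural number, and let v ∈ ℂ satisfy 1/ρ < |v| < ρ. Then the circle integral over the circle of radius ρ centered at 0 of the function w ↦ wⁿ · (1 − w⁻²)/2 · (Zh(w) − Zh(v))⁻¹ equals 2·π·i · 2·T_n(Zh(v)), where Zh(w) = (w + w⁻¹)/2 and T_n is the n-th Chebyshev polynomial of the first kind. -/
lemma cheb_eval (z : ℂ) (hz : z ≠ 0) :
    ∀ n : ℕ, (Polynomial.Chebyshev.T ℂ (n : ℤ)).eval ((z + z⁻¹) / 2)
      = (z ^ n + (z⁻¹) ^ n) / 2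
  | 0 => by simp [Polynomial.Chebyshev.T_zero]
  | 1 => by
      simp [Polynomial.Chebyshev.T_one]
  | (m + 2) => by
      have h0 := cheb_eval z hz m
      have h1 := cheb_eval z hz (m + 1)
      have hc : ((m + 2 : ℕ) : ℤ) = (m : ℤ) + 2 := by push_cast; ring
      have hc1 : ((m + 1 : ℕ) : ℤ) = (m : ℤ) + 1 := by push_cast; ring
      rw [hc, Polynomial.Chebyshev.T_add_two]
      rw [hc1] at h1
      simp only [Polynomial.eval_sub, Polynomial.eval_mul, Polynomial.eval_ofNat,
        Polynomial.eval_X, h0, h1]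
      linear_combination ((z ^ m + (z⁻¹) ^ m) / 2) * mul_inv_cancel₀ hz

/-- The Faber-polynomial contour-integral representation for the segment `[-1, 1]`:
for `ρ > 1`, `n ≥ 1` and `1/ρ < |v| < ρ`,
`∮_{|w|=ρ} wⁿ · (1 − w⁻²)/2 · (Zh(w) − Zh(v))⁻¹ dw = 2πi · 2·T_n(Zh(v))`. -/
theorem faber_contour_integral (ρ : ℝ) (hρ : 1 < ρ) (n : ℕ) (hn : 1 ≤ n) (v : ℂ)
    (hv₁ : 1 / ρ < ‖v‖) (hv₂ : ‖v‖ < ρ) :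
    (∮ w in C(0, ρ), w ^ n * ((1 - (w ^ 2)⁻¹) / 2) * (Zh w - Zh v)⁻¹) =
      2 * Real.pi * Complex.I * (2 * (Polynomial.Chebyshev.T ℂ n).eval (Zh v)) := by
  obtain ⟨m, rfl⟩ : ∃ m, n = m + 1 := ⟨n - 1, (Nat.succ_pred_eq_of_pos hn).symm⟩
  have hρ0 : (0:ℝ) < ρ := lt_trans zero_lt_one hρ
  have hva : 0 < ‖v‖ := lt_trans (by positivity) hv₁
  have hv0 : v ≠ 0 := by simpa using hva.ne'
  have hvinv : ‖v⁻¹‖ < ρ := by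
    rw [norm_inv, inv_lt_comm₀ hva hρ0, ← one_div]
    exact hv₁
  have hvball : v ∈ Metric.ball (0:ℂ) ρ := by
    simpa using hv₂
  have hvinvball : v⁻¹ ∈ Metric.ball (0:ℂ) ρ := by
    simpa using hvinv
  have hTn : (Polynomial.Chebyshev.T ℂ ((m+1 : ℕ) : ℤ)).eval (Zh v)
      = (v ^ (m+1) + (v⁻¹) ^ (m+1)) / 2 := by
    simpa [Zh] using cheb_eval v hv0 (m + 1)
  -- facts for w on the sphere
  have hsph : ∀ w ∈ Metric.sphere (0:ℂ) ρ, w ≠ 0 ∧ w ≠ v ∧ w ≠ v⁻¹ := by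
    intro w hw
    have habs : ‖w‖ = ρ := by
      simpa using (mem_sphere_zero_iff_norm.mp hw)
    refine ⟨?_, ?_, ?_⟩
    · rintro rfl; simp only [norm_zero] at habs; exact hρ0.ne' habs.symm
    · rintro rfl; exact absurd habs (ne_of_lt hv₂)
    · rintro rfl; exact absurd habs (ne_of_lt hvinv)
  have hZdiff : ∀ w : ℂ, w ≠ 0 → Zh w - Zh v = (w - v) * (w - v⁻¹) / (2 * w) := by
    intro w hw0
    simp only [Zh]
    field_simp
    ring
  by_cases hv2 : v ^ 2 = 1
  · -- special case v = ±1, single (simple) pole at v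
    have hv1 : v = 1 ∨ v = -1 := mul_self_eq_one_iff.mp (by linear_combination hv2)
    rcases hv1 with rfl | rfl
    · -- v = 1
      set M : ℂ → ℂ := fun w => w ^ (m + 1) + w ^ m with hM
      have hkey : Set.EqOn (fun w : ℂ => w ^ (m+1) * ((1 - (w ^ 2)⁻¹) / 2) * (Zh w - Zh 1)⁻¹)
          (fun w => (w - 1)⁻¹ • M w) (Metric.sphere (0:ℂ) ρ) := by
        intro w hw
        obtain ⟨hw0, hwv, -⟩ := hsph w hw
        have hwv' : w - 1 ≠ 0 := sub_ne_zero.mpr hwv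
        have hZ : Zh w - Zh 1 = (w - 1) ^ 2 / (2 * w) := by
          rw [hZdiff w hw0]; norm_num; ring
        simp only [hZ, hM, smul_eq_mul]
        field_simp
        ring
      have hMd : DiffContOnCl ℂ M (Metric.ball 0 ρ) :=
        ((differentiable_pow (m+1)).add (differentiable_pow m)).diffContOnCl
      rw [circleIntegral.integral_congr hρ0.le hkey,
        hMd.circleIntegral_sub_inv_smul hvball]
      simp only [hM, smul_eq_mul, hTn, inv_one]
      ring
    · -- v = -1
      set M : ℂ → ℂ := fun w => w ^ (m + 1) - w ^ m with hM
      have hkey : Set.EqOn (fun w : ℂ => w ^ (m+1) * ((1 - (w ^ 2)⁻¹) / 2) * (Zh w - Zh (-1))⁻¹)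
          (fun w => (w - (-1))⁻¹ • M w) (Metric.sphere (0:ℂ) ρ) := by
        intro w hw
        obtain ⟨hw0, hwv, -⟩ := hsph w hw
        have hwv' : w + 1 ≠ 0 := by
          intro h; exact hwv (by linear_combination h)
        have hZ : Zh w - Zh (-1) = (w + 1) ^ 2 / (2 * w) := by
          rw [hZdiff w hw0]; norm_num; ring
        simp only [hZ, hM, smul_eq_mul]
        rw [sub_neg_eq_add]
        field_simp
        ring
      have hMd : DiffContOnCl ℂ M (Metric.ball 0 ρ) :=
        ((differentiable_pow (m+1)).sub (differentiable_pow m)).diffContOnCl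
      rw [circleIntegral.integral_congr hρ0.le hkey,
        hMd.circleIntegral_sub_inv_smul hvball]
      have h1 : ((-1:ℂ))⁻¹ = -1 := by norm_num
      simp only [hM, smul_eq_mul, hTn, h1]
      ring
  · -- general case: two simple poles at v and v⁻¹
    have hvv : v - v⁻¹ ≠ 0 := by
      intro h
      apply hv2
      have h' := sub_eq_zero.mp h
      have hvm : v * v = 1 := by nth_rewrite 2 [h']; exact mul_inv_cancel₀ hv0
      rw [sq]; exact hvm
    set c : ℂ := (v - v⁻¹)⁻¹ with hc
    set N : ℂ → ℂ := fun w => c * (w ^ (m + 2) - w ^ m) with hN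
    have hNd : DiffContOnCl ℂ N (Metric.ball 0 ρ) :=
      ((differentiable_const c).mul
        ((differentiable_pow (m+2)).sub (differentiable_pow m))).diffContOnCl
    have hNc : Continuous N := by fun_prop
    have hkey : Set.EqOn (fun w : ℂ => w ^ (m+1) * ((1 - (w ^ 2)⁻¹) / 2) * (Zh w - Zh v)⁻¹)
        (fun w => (w - v)⁻¹ • N w - (w - v⁻¹)⁻¹ • N w) (Metric.sphere (0:ℂ) ρ) := by
      intro w hw
      obtain ⟨hw0, hwv, hwvi⟩ := hsph w hw
      have hwv' : w - v ≠ 0 := sub_ne_zero.mpr hwv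
      have hwvi' : w - v⁻¹ ≠ 0 := sub_ne_zero.mpr hwvi
      have e1 : (w - v) * (w - v)⁻¹ = 1 := mul_inv_cancel₀ hwv'
      have e2 : (w - v⁻¹) * (w - v⁻¹)⁻¹ = 1 := mul_inv_cancel₀ hwvi'
      have e3 : (v - v⁻¹) * (v - v⁻¹)⁻¹ = 1 := mul_inv_cancel₀ hvv
      have e4 : w ^ 2 * (w ^ 2)⁻¹ = 1 := mul_inv_cancel₀ (pow_ne_zero 2 hw0)
      simp only [hN, hZdiff w hw0, smul_eq_mul, hc]
      rw [inv_div]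
      simp only [div_eq_mul_inv, mul_inv]
      linear_combination
        (-(v - v⁻¹)⁻¹ * (w ^ (m+2) - w ^ m) * (w - v⁻¹)⁻¹) * e1
        + ((v - v⁻¹)⁻¹ * (w ^ (m+2) - w ^ m) * (w - v)⁻¹) * e2
        + (-(w ^ (m+2) - w ^ m) * (w - v)⁻¹ * (w - v⁻¹)⁻¹) * e3
        + (-w ^ m * (w - v)⁻¹ * (w - v⁻¹)⁻¹) * e4
    have hint1 : CircleIntegrable (fun w => (w - v)⁻¹ • N w) 0 ρ := by
      apply ContinuousOn.circleIntegrable hρ0.le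
      refine ContinuousOn.smul (f := fun w => (w - v)⁻¹) ?_ hNc.continuousOn
      exact ContinuousOn.inv₀ (by fun_prop) fun w hw => sub_ne_zero.mpr (hsph w hw).2.1
    have hint2 : CircleIntegrable (fun w => (w - v⁻¹)⁻¹ • N w) 0 ρ := by
      apply ContinuousOn.circleIntegrable hρ0.le
      refine ContinuousOn.smul (f := fun w => (w - v⁻¹)⁻¹) ?_ hNc.continuousOn
      exact ContinuousOn.inv₀ (by fun_prop) fun w hw => sub_ne_zero.mpr (hsph w hw).2.2
    rw [circleIntegral.integral_congr hρ0.le hkey,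
      circleIntegral.integral_sub hint1 hint2,
      hNd.circleIntegral_sub_inv_smul hvball,
      hNd.circleIntegral_sub_inv_smul hvinvball]
    simp only [hN, smul_eq_mul, hTn, hc]
    linear_combination (2 * (Real.pi : ℂ) * Complex.I * (v ^ (m+1) + (v⁻¹) ^ (m+1)))
        * mul_inv_cancel₀ hvv
      + (2 * (Real.pi : ℂ) * Complex.I * (v - v⁻¹)⁻¹ * (v ^ m - (v⁻¹) ^ m))
        * mul_inv_cancel₀ hv0
end
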